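/- Define D₃(ν) as 9·(ν(ν⁴−80)cos ν − ν(ν⁴−80)cosh ν + 80(ν²−4)cosh(ν/2)sin(ν/2) − 5(ν⁴+8ν²−32)sin ν + 80(ν²+4)cos(ν/2)sinh(ν/2) + 5(ν⁴−8ν²−32)sinh ν) / (160 ν⁹ (cos ν − cosh ν)). Then ν⁴·D₃(ν) tends to a finite positive limit as ν → ∞. -/

import Mathlib

noncomputable def D3 (ν : ℝ) : ℝ :=
  (9 * (ν * (ν ^ 4 - 80) * Real.cos ν - ν * (ν ^ 4 - 80) * Real.cosh ν +
    80 * (ν ^ 2 - 4) * Real.cosh (ν / 2) * Real.sin (ν / 2) -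
    5 * (ν ^ 4 + 8 * ν ^ 2 - 32) * Real.sin ν +
    80 * (ν ^ 2 + 4) * Real.cos (ν / 2) * Real.sinh (ν / 2) +
    5 * (ν ^ 4 - 8 * ν ^ 2 - 32) * Real.sinh ν)) /
    (160 * ν ^ 9 * (Real.cos ν - Real.cosh ν))

open Filter Real

lemma tendsto_cosh_atTop' : Tendsto Real.cosh atTop atTop := by
  apply tendsto_atTop_mono (f := fun x => Real.exp x / 2)
  · intro x
    rw [Real.cosh_eq]
    nlinarith [Real.exp_pos (-x)]
  · exact Real.tendsto_exp_atTop.atTop_div_const two_pos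

lemma inv_cosh_tendsto : Tendsto (fun ν => (Real.cosh ν)⁻¹) atTop (nhds 0) :=
  tendsto_cosh_atTop'.inv_tendsto_atTop

/-- product of something tending to 0 and something eventually bounded by 1 tends to 0 -/
lemma mul_bdd_tendsto {c q : ℝ → ℝ} (hc : Tendsto c atTop (nhds 0))
    (hq : ∀ᶠ ν in atTop, |q ν| ≤ 1) :
    Tendsto (fun ν => c ν * q ν) atTop (nhds 0) := by
  refine squeeze_zero_norm' (a := fun ν => |c ν|) ?_ ?_
  · filter_upwards [hq] with ν hν
    rw [Real.norm_eq_abs, abs_mul]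
    calc |c ν| * |q ν| ≤ |c ν| * 1 := by
          exact mul_le_mul_of_nonneg_left hν (abs_nonneg _)
      _ = |c ν| := mul_one _
  · simpa using hc.abs

lemma inv_pow_tendsto (k : ℕ) (hk : 0 < k) :
    Tendsto (fun ν : ℝ => (ν ^ k)⁻¹) atTop (nhds 0) :=
  (tendsto_pow_atTop hk.ne').inv_tendsto_atTop

theorem D3_large_nu :
    ∃ L : ℝ, 0 < L ∧
      Filter.Tendsto (fun ν => ν ^ 4 * D3 ν) Filter.atTop (nhds L) := by
  refine ⟨9 / 160, by norm_num, ?_⟩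
  -- the normalized form
  set H : ℝ → ℝ := fun ν =>
    (9 * ((1 - 80 * (ν ^ 4)⁻¹) * (Real.cos ν / Real.cosh ν) - (1 - 80 * (ν ^ 4)⁻¹)
      + (80 * (ν ^ 3)⁻¹ - 320 * (ν ^ 5)⁻¹) *
          (Real.cosh (ν / 2) * Real.sin (ν / 2) / Real.cosh ν)
      - (5 * ν⁻¹ + 40 * (ν ^ 3)⁻¹ - 160 * (ν ^ 5)⁻¹) * (Real.sin ν / Real.cosh ν)
      + (80 * (ν ^ 3)⁻¹ + 320 * (ν ^ 5)⁻¹) *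
          (Real.cos (ν / 2) * Real.sinh (ν / 2) / Real.cosh ν)
      + (5 * ν⁻¹ - 40 * (ν ^ 3)⁻¹ - 160 * (ν ^ 5)⁻¹) * (Real.sinh ν / Real.cosh ν))) /
      (160 * (Real.cos ν / Real.cosh ν - 1)) with hH
  have heq : ∀ᶠ ν in atTop, ν ^ 4 * D3 ν = H ν := by
    filter_upwards [eventually_ge_atTop (1 : ℝ)] with ν hν
    have hν0 : ν ≠ 0 := by positivity
    have hch : Real.cosh ν ≠ 0 := (Real.cosh_pos ν).ne'
    have hcc : Real.cos ν - Real.cosh ν ≠ 0 := by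
      have h1 : Real.cos ν ≤ 1 := Real.cos_le_one ν
      have h2 : 1 < Real.cosh ν := Real.one_lt_cosh.2 hν0
      linarith
    have hcc' : Real.cos ν / Real.cosh ν - 1 ≠ 0 := by
      rw [div_sub_one hch]
      exact div_ne_zero hcc hch
    simp only [hH, D3]
    field_simp
    ring
  rw [Filter.tendsto_congr' heq]
  -- bounded quotients
  have hb1 : ∀ᶠ ν in atTop, |Real.cosh (ν / 2) * Real.sin (ν / 2) / Real.cosh ν| ≤ 1 := by
    filter_upwards [eventually_ge_atTop (0 : ℝ)] with ν hν
    have h1 : Real.cosh (ν / 2) ≤ Real.cosh ν := Real.cosh_le_cosh.2 (by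
      rw [abs_of_nonneg (by linarith), abs_of_nonneg hν]; linarith)
    rw [abs_div, abs_mul, abs_of_pos (Real.cosh_pos _), abs_of_pos (Real.cosh_pos _),
      div_le_one (Real.cosh_pos _)]
    nlinarith [Real.abs_sin_le_one (ν / 2), abs_nonneg (Real.sin (ν / 2)),
      Real.cosh_pos (ν / 2)]
  have hb2 : ∀ᶠ ν in atTop, |Real.sin ν / Real.cosh ν| ≤ 1 := by
    filter_upwards with ν
    rw [abs_div, abs_of_pos (Real.cosh_pos _), div_le_one (Real.cosh_pos _)]
    exact le_trans (Real.abs_sin_le_one ν) (Real.one_le_cosh ν)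
  have hb3 : ∀ᶠ ν in atTop, |Real.cos (ν / 2) * Real.sinh (ν / 2) / Real.cosh ν| ≤ 1 := by
    filter_upwards [eventually_ge_atTop (0 : ℝ)] with ν hν
    have h1 : Real.cosh (ν / 2) ≤ Real.cosh ν := Real.cosh_le_cosh.2 (by
      rw [abs_of_nonneg (by linarith), abs_of_nonneg hν]; linarith)
    have h2 : |Real.sinh (ν / 2)| ≤ Real.cosh (ν / 2) := by
      rw [Real.abs_sinh]
      exact le_trans (Real.sinh_lt_cosh _).le (le_of_eq (Real.cosh_abs _))
    rw [abs_div, abs_mul, abs_of_pos (Real.cosh_pos _), div_le_one (Real.cosh_pos _)]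
    nlinarith [Real.abs_cos_le_one (ν / 2), abs_nonneg (Real.sinh (ν / 2)),
      abs_nonneg (Real.cos (ν / 2))]
  have hb4 : ∀ᶠ ν in atTop, |Real.sinh ν / Real.cosh ν| ≤ 1 := by
    filter_upwards with ν
    rw [abs_div, abs_of_pos (Real.cosh_pos _), div_le_one (Real.cosh_pos _), Real.abs_sinh]
    exact le_trans (Real.sinh_lt_cosh _).le (le_of_eq (Real.cosh_abs _))
  -- component limits
  have hcosq : Tendsto (fun ν => Real.cos ν / Real.cosh ν) atTop (nhds 0) := by
    refine squeeze_zero_norm' (a := fun ν => (Real.cosh ν)⁻¹) ?_ ?_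
    · filter_upwards with ν
      rw [Real.norm_eq_abs, abs_div, abs_of_pos (Real.cosh_pos _),
        div_le_iff₀ (Real.cosh_pos _), inv_mul_cancel₀ (Real.cosh_pos ν).ne']
      exact Real.abs_cos_le_one ν
    · exact inv_cosh_tendsto
  have hinv1 : Tendsto (fun ν : ℝ => ν⁻¹) atTop (nhds 0) := tendsto_inv_atTop_zero
  have hinv3 := inv_pow_tendsto 3 (by norm_num)
  have hinv4 := inv_pow_tendsto 4 (by norm_num)
  have hinv5 := inv_pow_tendsto 5 (by norm_num)
  have hc0 : Tendsto (fun ν : ℝ => 1 - 80 * (ν ^ 4)⁻¹) atTop (nhds 1) := by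
    have := (hinv4.const_mul 80).const_sub 1
    simpa using this
  have ht3 : Tendsto (fun ν : ℝ => (80 * (ν ^ 3)⁻¹ - 320 * (ν ^ 5)⁻¹) *
      (Real.cosh (ν / 2) * Real.sin (ν / 2) / Real.cosh ν)) atTop (nhds 0) := by
    apply mul_bdd_tendsto _ hb1
    have := (hinv3.const_mul 80).sub (hinv5.const_mul 320)
    simpa using this
  have ht4 : Tendsto (fun ν : ℝ => (5 * ν⁻¹ + 40 * (ν ^ 3)⁻¹ - 160 * (ν ^ 5)⁻¹) *
      (Real.sin ν / Real.cosh ν)) atTop (nhds 0) := by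
    apply mul_bdd_tendsto _ hb2
    have := ((hinv1.const_mul 5).add (hinv3.const_mul 40)).sub (hinv5.const_mul 160)
    simpa using this
  have ht5 : Tendsto (fun ν : ℝ => (80 * (ν ^ 3)⁻¹ + 320 * (ν ^ 5)⁻¹) *
      (Real.cos (ν / 2) * Real.sinh (ν / 2) / Real.cosh ν)) atTop (nhds 0) := by
    apply mul_bdd_tendsto _ hb3
    have := (hinv3.const_mul 80).add (hinv5.const_mul 320)
    simpa using this
  have ht6 : Tendsto (fun ν : ℝ => (5 * ν⁻¹ - 40 * (ν ^ 3)⁻¹ - 160 * (ν ^ 5)⁻¹) *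
      (Real.sinh ν / Real.cosh ν)) atTop (nhds 0) := by
    apply mul_bdd_tendsto _ hb4
    have := ((hinv1.const_mul 5).sub (hinv3.const_mul 40)).sub (hinv5.const_mul 160)
    simpa using this
  have ht1 : Tendsto (fun ν : ℝ => (1 - 80 * (ν ^ 4)⁻¹) * (Real.cos ν / Real.cosh ν))
      atTop (nhds 0) := by
    have := hc0.mul hcosq
    simpa using this
  -- numerator
  have hnum : Tendsto (fun ν : ℝ =>
      9 * ((1 - 80 * (ν ^ 4)⁻¹) * (Real.cos ν / Real.cosh ν) - (1 - 80 * (ν ^ 4)⁻¹)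
      + (80 * (ν ^ 3)⁻¹ - 320 * (ν ^ 5)⁻¹) *
          (Real.cosh (ν / 2) * Real.sin (ν / 2) / Real.cosh ν)
      - (5 * ν⁻¹ + 40 * (ν ^ 3)⁻¹ - 160 * (ν ^ 5)⁻¹) * (Real.sin ν / Real.cosh ν)
      + (80 * (ν ^ 3)⁻¹ + 320 * (ν ^ 5)⁻¹) *
          (Real.cos (ν / 2) * Real.sinh (ν / 2) / Real.cosh ν)
      + (5 * ν⁻¹ - 40 * (ν ^ 3)⁻¹ - 160 * (ν ^ 5)⁻¹) * (Real.sinh ν / Real.cosh ν)))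
      atTop (nhds (-9)) := by
    have := (((((ht1.sub hc0).add ht3).sub ht4).add ht5).add ht6).const_mul 9
    convert this using 2
    norm_num
  have hden : Tendsto (fun ν : ℝ => 160 * (Real.cos ν / Real.cosh ν - 1)) atTop
      (nhds (-160)) := by
    have := (hcosq.sub_const 1).const_mul 160
    convert this using 2
    norm_num
  have := hnum.div hden (by norm_num)
  convert this using 2
  norm_num
  · rfl
  · norm_num
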